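/- Let κ, λ be infinite cardinals with cf(κ) ≤ λ < κ. Let W = {-1} ∪ κ ordered with -1 below every ordinal, and let X = {f ∈ W^{λ⁺} : f has support bounded below λ⁺} (i.e., there is γ < λ⁺ with f(α) = 0 for all α ≥ γ), with the topology induced by the lexicographic order. Then X is the union of λ⁺ many discrete subspaces; i.e., dis(X) ≤ λ⁺. -/

import Mathlib

open Set Cardinal TopologicalSpace

/-- A subset `s` of a topological space is discrete (as a subspace) iff every point of `s`
has an open neighbourhood in the ambient space meeting `s` only in that point. -/
def IsDiscreteSubset {X : Type*} [TopologicalSpace X] (s : Set X) : Prop :=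
  ∀ x ∈ s, ∃ U : Set X, IsOpen U ∧ U ∩ s = {x}

/-- `dis X`: the least cardinality of a family of discrete subsets covering `X`. -/
noncomputable def dis (X : Type*) [TopologicalSpace X] : Cardinal :=
  sInf {c : Cardinal | ∃ 𝒟 : Set (Set X), #𝒟 = c ∧ (∀ D ∈ 𝒟, IsDiscreteSubset D) ∧
    ⋃₀ 𝒟 = Set.univ}

/-- `Delta X`: the dispersion character, i.e. the least cardinality of a nonempty open set. -/
noncomputable def Delta (X : Type*) [TopologicalSpace X] : Cardinal :=
  sInf {c : Cardinal | ∃ U : Set X, IsOpen U ∧ U.Nonempty ∧ #U = c}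

open Ordinal

/-- The index set: the canonical well-order of order type `(λ⁺).ord`, i.e. the ordinals
below `λ⁺`. -/
abbrev LexIdx (lam : Cardinal.{0}) : Type := (Order.succ lam).ord.ToType

/-- The underlying set of the example: functions from `λ⁺` into `W = {-1} ∪ κ` (here `⊥`
plays the role of `-1` and the ordinals `< κ.ord` play the role of the elements of `κ`,
with `0` the zero of `κ`) having bounded support, carrying the lexicographic order. -/
def LexFun (κ lam : Cardinal.{0}) : Set (Lex (LexIdx lam → WithBot Ordinal.{0})) :=
  {f | (∀ i, ofLex f i = ⊥ ∨ ∃ o : Ordinal, o < κ.ord ∧ ofLex f i = (o : WithBot Ordinal)) ∧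
       ∃ γ : LexIdx lam, ∀ i, γ ≤ i → ofLex f i = ((0 : Ordinal) : WithBot Ordinal)}

/-- The space `X` of the example. -/
def LexSpace (κ lam : Cardinal.{0}) : Type 1 := ↥(LexFun κ lam)

noncomputable instance (κ lam : Cardinal.{0}) : LinearOrder (LexSpace κ lam) :=
  inferInstanceAs (LinearOrder ↥(LexFun κ lam))

/-- `X` carries the topology induced by the lexicographic order. -/
noncomputable instance (κ lam : Cardinal.{0}) : TopologicalSpace (LexSpace κ lam) :=
  Preorder.topology _

instance (κ lam : Cardinal.{0}) : OrderTopology (LexSpace κ lam) := ⟨rfl⟩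

/-- In the lexicographic order on a Pi type, if two functions agree strictly below `i` and
differ at `i`, then the order between them is decided at coordinate `i`. -/
theorem lex_lt_iff_of_agree {ι : Type*} [LinearOrder ι] [WellFoundedLT ι]
    {x y : Lex (ι → WithBot Ordinal.{0})} {i : ι}
    (hag : ∀ j, j < i → ofLex x j = ofLex y j) (hne : ofLex x i ≠ ofLex y i) :
    x < y ↔ ofLex x i < ofLex y i := by
  constructor
  · rintro ⟨j, h1, h2⟩
    rcases lt_trichotomy j i with h | rfl | h
    · exact absurd (hag j h) (ne_of_lt h2)
    · exact h2
    · exact absurd (h1 i h) hne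
  · exact fun h => ⟨i, hag, h⟩

/-- The space `X` is the union of `λ⁺` many discrete subspaces. -/
theorem statement13 (κ lam : Cardinal.{0}) (h0 : Cardinal.aleph0 ≤ lam)
    (hcf : κ.ord.cof ≤ lam) (hlt : lam < κ) :
    ∃ D : Quotient.out (Order.succ lam : Cardinal) → Set (LexSpace κ lam),
      (∀ i, IsDiscreteSubset (D i)) ∧ ⋃ i, D i = Set.univ := by
  -- every element of the index well-order has a strict upper bound
  have hlim : Order.IsSuccLimit ((Order.succ lam : Cardinal).ord) :=
    Cardinal.isSuccLimit_ord (h0.trans (Order.le_succ lam))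
  have hsucc : ∀ γ : LexIdx lam, ∃ δ : LexIdx lam, γ < δ := by
    intro γ
    set e := Ordinal.ToType.mk (o := (Order.succ lam : Cardinal).ord) with he
    refine ⟨e ⟨Order.succ (e.symm γ : Ordinal), hlim.succ_lt (Set.mem_Iio.mp (e.symm γ).2)⟩, ?_⟩
    conv_lhs => rw [← e.apply_symm_apply γ]
    exact e.lt_iff_lt.mpr (Subtype.mk_lt_mk.mpr (Order.lt_succ _))
  have h1κ : (1 : Ordinal) < κ.ord := by
    rw [Cardinal.lt_ord]
    simpa using Cardinal.one_lt_aleph0.trans_le (h0.trans hlt.le)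
  -- the candidate discrete pieces
  set D0 : LexIdx lam → Set (LexSpace κ lam) := fun γ =>
    {f | ∀ i, γ ≤ i → ofLex f.1 i
      = ((0 : Ordinal) : WithBot Ordinal)} with hD0
  have hdisc : ∀ γ, IsDiscreteSubset (D0 γ) := by
    intro γ f hf
    obtain ⟨δ, hδ⟩ := hsucc γ
    have hfγ : ofLex f.1 γ
        = ((0 : Ordinal) : WithBot Ordinal) := hf γ le_rfl
    set xm : Lex (LexIdx lam → WithBot Ordinal) :=
      toLex (Function.update (ofLex f.1) γ ⊥) with hxmdef
    set xp : Lex (LexIdx lam → WithBot Ordinal) :=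
      toLex (Function.update (ofLex f.1) γ
        ((1 : Ordinal) : WithBot Ordinal)) with hxpdef
    have hxm_ne : ∀ i, i ≠ γ → ofLex xm i = ofLex f.1 i := by
      intro i hi
      simp [hxmdef, Function.update_of_ne hi]
    have hxp_ne : ∀ i, i ≠ γ → ofLex xp i = ofLex f.1 i := by
      intro i hi
      simp [hxpdef, Function.update_of_ne hi]
    have hxm_γ : ofLex xm γ = ⊥ := by simp [hxmdef]
    have hxp_γ : ofLex xp γ = ((1 : Ordinal) : WithBot Ordinal) := by simp [hxpdef]
    have hxm_mem : xm ∈ LexFun κ lam := by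
      constructor
      · intro i
        rcases eq_or_ne i γ with rfl | h
        · exact Or.inl hxm_γ
        · rw [hxm_ne i h]; exact f.2.1 i
      · refine ⟨δ, fun i hi => ?_⟩
        rw [hxm_ne i (fun h => absurd (h ▸ hi) (not_le.mpr hδ))]
        exact hf i ((le_of_lt hδ).trans hi)
    have hxp_mem : xp ∈ LexFun κ lam := by
      constructor
      · intro i
        rcases eq_or_ne i γ with rfl | h
        · exact Or.inr ⟨1, h1κ, hxp_γ⟩
        · rw [hxp_ne i h]; exact f.2.1 i
      · refine ⟨δ, fun i hi => ?_⟩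
        rw [hxp_ne i (fun h => absurd (h ▸ hi) (not_le.mpr hδ))]
        exact hf i ((le_of_lt hδ).trans hi)
    set Fm : LexSpace κ lam := ⟨xm, hxm_mem⟩ with hFm
    set Fp : LexSpace κ lam := ⟨xp, hxp_mem⟩ with hFp
    have hltm : Fm < f := by
      refine Subtype.mk_lt_mk.mpr ?_
      refine ⟨γ, fun j hj => hxm_ne j (ne_of_lt hj), ?_⟩
      show ofLex xm γ < ofLex f.1 γ
      rw [hxm_γ, hfγ]
      exact WithBot.bot_lt_coe _
    have hltp : f < Fp := by
      refine Subtype.mk_lt_mk.mpr ?_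
      refine ⟨γ, fun j hj => (hxp_ne j (ne_of_lt hj)).symm, ?_⟩
      show ofLex f.1 γ < ofLex xp γ
      rw [hxp_γ, hfγ]
      exact WithBot.coe_lt_coe.mpr zero_lt_one
    refine ⟨Set.Ioo Fm Fp, isOpen_Ioo, ?_⟩
    ext g
    constructor
    · rintro ⟨⟨hg1, hg2⟩, hgD⟩
      by_contra hne
      have hne' : ofLex g.1
          ≠ ofLex f.1 := by
        intro h
        exact hne (Subtype.ext (ofLex.injective h))
      have hS : ∃ i, ofLex g.1 i
          ≠ ofLex f.1 i := Function.ne_iff.mp hne'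
      set i := WellFounded.min wellFounded_lt _ hS with hidef
      have hi : ofLex g.1 i
          ≠ ofLex f.1 i := WellFounded.min_mem _ _ hS
      have hmin : ∀ j, j < i → ofLex g.1 j
          = ofLex f.1 j := by
        intro j hj
        by_contra h
        exact WellFounded.not_lt_min wellFounded_lt _ h hj
      have hiγ : i < γ := by
        by_contra h
        exact hi ((hgD i (not_lt.mp h)).trans (hf i (not_lt.mp h)).symm)
      have h1 : ofLex f.1 i
          < ofLex g.1 i := by
        have hag : ∀ j, j < i → ofLex xm j = ofLex g.1 j :=
          fun j hj => (hxm_ne j (ne_of_lt (hj.trans hiγ))).trans (hmin j hj).symm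
        have hne2 : ofLex xm i ≠ ofLex g.1 i := by
          rw [hxm_ne i (ne_of_lt hiγ)]
          exact fun h => hi h.symm
        have := (lex_lt_iff_of_agree hag hne2).mp (Subtype.mk_lt_mk.mp hg1)
        rwa [hxm_ne i (ne_of_lt hiγ)] at this
      have h2 : ofLex g.1 i
          < ofLex f.1 i := by
        have hag : ∀ j, j < i → ofLex g.1 j = ofLex xp j :=
          fun j hj => (hmin j hj).trans (hxp_ne j (ne_of_lt (hj.trans hiγ))).symm
        have hne2 : ofLex g.1 i ≠ ofLex xp i := by
          rw [hxp_ne i (ne_of_lt hiγ)]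
          exact hi
        have := (lex_lt_iff_of_agree hag hne2).mp (Subtype.mk_lt_mk.mp hg2)
        rwa [hxp_ne i (ne_of_lt hiγ)] at this
      exact lt_asymm h1 h2
    · rintro rfl
      exact ⟨⟨hltm, hltp⟩, hf⟩
  have hcover : ⋃ γ, D0 γ = Set.univ := by
    ext f
    simp only [Set.mem_iUnion, Set.mem_univ, iff_true]
    obtain ⟨γ, hγ⟩ := f.2.2
    exact ⟨γ, fun i hi => hγ i hi⟩
  have hmk : #(Quotient.out (Order.succ lam : Cardinal)) = #(LexIdx lam) := by
    rw [Cardinal.mk_out, LexIdx, Cardinal.mk_ord_toType]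
  obtain ⟨e⟩ := Cardinal.eq.mp hmk
  exact ⟨fun x => D0 (e x), fun x => hdisc (e x),
    (e.surjective.iUnion_comp D0).trans hcover⟩
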